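/- Let A be an invertible Hermitian N×N complex matrix, let m ≥ 1 be an integer and ε > 0, and set C_m = 1/(m!·2^{m−1}) and K = C_m/N. If A has at least m eigenvalues, counted with multiplicity, in the open interval (−ε, ε), then there exist index subsets α, β ⊆ {1,…,N}, each of cardinality m, such that the m×m matrix A⁻¹[α,β]·A⁻¹[β,α] − (K/ε)²·I_m is positive definite. -/

import Mathlib

open Matrix
open scoped ComplexOrder

/-- Number of eigenvalues (with multiplicity) of a Hermitian matrix in the open
interval `(a, b)`. -/
noncomputable def eigCountIoo {n : Type*} [Fintype n] [DecidableEq n]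
    (M : Matrix n n ℂ) (a b : ℝ) : ℕ :=
  if hM : M.IsHermitian then Nat.card {i : n // hM.eigenvalues i ∈ Set.Ioo a b} else 0


noncomputable def Qsum {ι : Type*} [Fintype ι] (y : ι → ℂ) : ℝ := ∑ i, Complex.normSq (y i)

lemma Qsum_nonneg {ι : Type*} [Fintype ι] (y : ι → ℂ) : 0 ≤ Qsum y :=
  Finset.sum_nonneg fun i _ => Complex.normSq_nonneg _

lemma Qsum_pos {ι : Type*} [Fintype ι] {y : ι → ℂ} (hy : y ≠ 0) : 0 < Qsum y := by
  obtain ⟨i, hi⟩ : ∃ i, y i ≠ 0 := by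
    by_contra h; push_neg at h; exact hy (funext h)
  exact Finset.sum_pos' (fun j _ => Complex.normSq_nonneg _)
    ⟨i, Finset.mem_univ i, Complex.normSq_pos.mpr hi⟩

lemma star_dot_self {ι : Type*} [Fintype ι] (y : ι → ℂ) :
    star y ⬝ᵥ y = (Qsum y : ℂ) := by
  simp only [dotProduct, Pi.star_apply, Qsum, Complex.ofReal_sum]
  refine Finset.sum_congr rfl fun i _ => ?_
  exact (Complex.normSq_eq_conj_mul_self (z := y i)).symm

lemma Qsum_mulVec_unitary {N : ℕ} {U : Matrix (Fin N) (Fin N) ℂ}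
    (hU : star U * U = 1) (c : Fin N → ℂ) : Qsum (U *ᵥ c) = Qsum c := by
  have h : star (U *ᵥ c) ⬝ᵥ (U *ᵥ c) = star c ⬝ᵥ c := by
    rw [star_mulVec, dotProduct_mulVec, vecMul_vecMul, ← Matrix.star_eq_conjTranspose, hU,
      vecMul_one]
  rw [star_dot_self, star_dot_self] at h
  exact_mod_cast h

lemma Qsum_mulVec_le {ι : Type*} [Fintype ι] (S : Matrix ι ι ℂ) (q : ℝ) (hq : 0 ≤ q)
    (hS : ∀ i j, ‖(S i j)‖ ≤ q) (x : ι → ℂ) :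
    Qsum (S *ᵥ x) ≤ ((Fintype.card ι) * q) ^ 2 * Qsum x := by
  set T := ∑ j, ‖(x j)‖ with hT
  have hT2 : T ^ 2 ≤ (Fintype.card ι) * Qsum x := by
    have := Finset.sum_mul_sq_le_sq_mul_sq Finset.univ (fun _ : ι => (1:ℝ))
      (fun j => ‖(x j)‖)
    simp only [one_mul, one_pow] at this
    calc T^2 ≤ (∑ _j : ι, (1:ℝ)) * ∑ j, ‖(x j)‖ ^ 2 := this
      _ = (Fintype.card ι) * Qsum x := by
          simp [Qsum, Complex.sq_norm, Finset.card_univ]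
  have hentry : ∀ i, Complex.normSq ((S *ᵥ x) i) ≤ (q * T)^2 := by
    intro i
    have h1 : ‖((S *ᵥ x) i)‖ ≤ q * T := by
      calc ‖((S *ᵥ x) i)‖ ≤ ∑ j, ‖(S i j * x j)‖ := by
            simpa [Matrix.mulVec, dotProduct] using
              (norm_sum_le Finset.univ (fun j => S i j * x j))
        _ ≤ ∑ j, q * ‖(x j)‖ := by
            refine Finset.sum_le_sum fun j _ => ?_
            rw [norm_mul (S i j) (x j)]
            exact mul_le_mul_of_nonneg_right (hS i j) (norm_nonneg _)
        _ = q * T := by rw [hT, Finset.mul_sum]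
    have := Complex.sq_norm ((S *ᵥ x) i)
    nlinarith [norm_nonneg ((S *ᵥ x) i)]
  have hTnn : 0 ≤ T := Finset.sum_nonneg fun j _ => norm_nonneg _
  calc Qsum (S *ᵥ x) ≤ ∑ _i : ι, (q*T)^2 := Finset.sum_le_sum fun i _ => hentry i
    _ = (Fintype.card ι) * (q*T)^2 := by simp [Finset.card_univ]
    _ = ((Fintype.card ι : ℝ) * q^2) * T^2 := by ring
    _ ≤ ((Fintype.card ι : ℝ) * q^2) * ((Fintype.card ι) * Qsum x) :=
        mul_le_mul_of_nonneg_left hT2 (by positivity)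
    _ = ((Fintype.card ι) * q)^2 * Qsum x := by ring


lemma absdet_sub_perm {k : ℕ} (X : Matrix (Fin k) (Fin k) ℂ) (σ τ : Equiv.Perm (Fin k)) :
    ‖(det (X.submatrix σ τ))‖ = ‖(det X)‖ := by
  have h : X.submatrix ⇑σ ⇑τ = (X.submatrix id ⇑τ).submatrix ⇑σ id := by
    simp [Matrix.submatrix_submatrix]
  have habs : ∀ (u : ℤˣ) (z : ℂ), ‖(((u : ℤ) : ℂ) * z)‖ = ‖z‖ := by
    intro u z
    rcases Int.units_eq_one_or u with h' | h' <;> simp [h']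
  rw [h, Matrix.det_permute, Matrix.det_permute', habs, habs]

lemma absdet_perm {k N : ℕ} (M : Matrix (Fin N) (Fin N) ℂ) (f g f' g' : Fin k → Fin N)
    (hf : Function.Injective f) (hf' : Function.Injective f')
    (hg : Function.Injective g) (hg' : Function.Injective g')
    (hrf : Set.range f = Set.range f') (hrg : Set.range g = Set.range g') :
    ‖(det (M.submatrix f g))‖ = ‖(det (M.submatrix f' g'))‖ := by
  obtain ⟨σ, hσ⟩ : ∃ σ : Equiv.Perm (Fin k), f = f' ∘ σ := by
    refine ⟨(Equiv.ofInjective f hf).trans ((Equiv.setCongr hrf).trans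
      (Equiv.ofInjective f' hf').symm), ?_⟩
    funext a
    show f a = f' ((Equiv.ofInjective f' hf').symm ((Equiv.setCongr hrf)
      ((Equiv.ofInjective f hf) a)))
    rw [Equiv.apply_ofInjective_symm hf']
    rfl
  obtain ⟨τ, hτ⟩ : ∃ τ : Equiv.Perm (Fin k), g = g' ∘ τ := by
    refine ⟨(Equiv.ofInjective g hg).trans ((Equiv.setCongr hrg).trans
      (Equiv.ofInjective g' hg').symm), ?_⟩
    funext a
    show g a = g' ((Equiv.ofInjective g' hg').symm ((Equiv.setCongr hrg)
      ((Equiv.ofInjective g hg) a)))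
    rw [Equiv.apply_ofInjective_symm hg']
    rfl
  rw [hσ, hτ, ← Matrix.submatrix_submatrix]
  exact absdet_sub_perm _ σ τ


lemma exvec {N : ℕ} (A : Matrix (Fin N) (Fin N) ℂ) (hA : A.IsHermitian)
    (hμ : ∀ i, hA.eigenvalues i ≠ 0)
    (T : Finset (Fin N)) (ε' : ℝ)
    (hT : ∀ i ∈ T, |hA.eigenvalues i| ≤ ε')
    {j : ℕ} (hj : j < T.card) (w : Fin j → Fin N) :
    ∃ x : Fin N → ℂ, x ≠ 0 ∧ (∀ a, (A⁻¹ *ᵥ x) (w a) = 0) ∧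
      Qsum x ≤ ε' ^ 2 * Qsum (A⁻¹ *ᵥ x) := by
  classical
  set μ := hA.eigenvalues with hμdef
  set U : Matrix (Fin N) (Fin N) ℂ := (hA.eigenvectorUnitary : Matrix (Fin N) (Fin N) ℂ)
    with hUdef
  have hU1 : star U * U = 1 := Matrix.mem_unitaryGroup_iff'.mp hA.eigenvectorUnitary.2
  have hU2 : U * star U = 1 := Matrix.mem_unitaryGroup_iff.mp hA.eigenvectorUnitary.2
  set D : Matrix (Fin N) (Fin N) ℂ := diagonal (RCLike.ofReal ∘ μ) with hDdef
  have hspec : A = U * D * star U := hA.spectral_theorem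
  set Dinv : Matrix (Fin N) (Fin N) ℂ := diagonal (fun i => ((μ i : ℂ))⁻¹) with hDinvdef
  have hDDinv : D * Dinv = 1 := by
    rw [hDdef, hDinvdef, diagonal_mul_diagonal]
    have h1 : (fun i => (RCLike.ofReal ∘ μ) i * ((μ i : ℂ))⁻¹) = fun _ => (1:ℂ) := by
      funext i
      simp only [Function.comp_apply]
      exact mul_inv_cancel₀ (Complex.ofReal_ne_zero.mpr (hμ i))
    rw [h1, diagonal_one]
  have hone : A * (U * Dinv * star U) = 1 := by
    rw [hspec]
    calc U * D * star U * (U * Dinv * star U)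
        = U * (D * ((star U * U) * (Dinv * star U))) := by simp only [Matrix.mul_assoc]
      _ = U * (D * Dinv * star U) := by rw [hU1, one_mul, Matrix.mul_assoc]
      _ = U * star U := by rw [hDDinv, one_mul]
      _ = 1 := hU2
  have hAinv : A⁻¹ = U * Dinv * star U := inv_eq_right_inv hone
  have hAU : A⁻¹ * U = U * Dinv := by
    rw [hAinv, Matrix.mul_assoc, Matrix.mul_assoc, hU1, mul_one]
  -- the linear map
  let Φ : (↥T → ℂ) →ₗ[ℂ] (Fin N → ℂ) :=
  { toFun := fun c i => if h : i ∈ T then c ⟨i, h⟩ else 0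
    map_add' := by intro a b; funext i; by_cases h : i ∈ T <;> simp [h]
    map_smul' := by intro r a; funext i; by_cases h : i ∈ T <;> simp [h] }
  let L : (↥T → ℂ) →ₗ[ℂ] (Fin j → ℂ) := (((A⁻¹ * U).submatrix w id).mulVecLin).comp Φ
  have hL : ¬ Function.Injective L := by
    intro hinj
    have hle := LinearMap.finrank_le_finrank_of_injective hinj
    rw [Module.finrank_pi, Module.finrank_pi, Fintype.card_coe, Fintype.card_fin] at hle
    omega
  obtain ⟨a, b, hab, hne⟩ := Function.not_injective_iff.mp hL
  set c' : ↥T → ℂ := a - b with hc'def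
  have hc' : c' ≠ 0 := sub_ne_zero.mpr hne
  have hLc' : L c' = 0 := by rw [hc'def, map_sub, hab, sub_self]
  set c : Fin N → ℂ := Φ c' with hcdef
  have hc : c ≠ 0 := by
    obtain ⟨i0, hi0⟩ := Function.ne_iff.mp hc'
    intro h0
    apply hi0
    have h1 := congrFun h0 i0.1
    simpa [hcdef, Φ, i0.2] using h1
  set x : Fin N → ℂ := U *ᵥ c with hxdef
  have hx0 : x ≠ 0 := by
    intro h0
    apply hc
    have h1 : star U *ᵥ (U *ᵥ c) = c := by
      rw [mulVec_mulVec, hU1, one_mulVec]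
    rw [← h1, ← hxdef, h0, mulVec_zero]
  have hxc : A⁻¹ *ᵥ x = (A⁻¹ * U) *ᵥ c := by rw [← mulVec_mulVec]
  refine ⟨x, hx0, ?_, ?_⟩
  · intro a'
    have h := congrFun hLc' a'
    simp only [L, LinearMap.comp_apply, mulVecLin_apply, Pi.zero_apply] at h
    calc (A⁻¹ *ᵥ x) (w a') = ((A⁻¹ * U) *ᵥ c) (w a') := by rw [hxc]
      _ = (((A⁻¹ * U).submatrix w id) *ᵥ c) a' := rfl
      _ = 0 := h
  · have hAx : A⁻¹ *ᵥ x = U *ᵥ (Dinv *ᵥ c) := by rw [hxc, hAU, ← mulVec_mulVec]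
    rw [hxdef, hAx, Qsum_mulVec_unitary hU1, Qsum_mulVec_unitary hU1]
    unfold Qsum
    rw [Finset.mul_sum]
    refine Finset.sum_le_sum fun i _ => ?_
    rw [mulVec_diagonal]
    by_cases h : i ∈ T
    · have hμ2 : 0 < (μ i)^2 := by
        have h2 := pow_pos (abs_pos.mpr (hμ i)) 2
        rwa [sq_abs] at h2
      have hμε : (μ i)^2 ≤ ε'^2 := by
        have h1 := hT i h
        nlinarith [abs_nonneg (μ i), sq_abs (μ i)]
      have hns : Complex.normSq ((μ i : ℂ)⁻¹ * c i) = (Complex.normSq (c i)) / (μ i)^2 := by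
        rw [Complex.normSq_mul, ← Complex.ofReal_inv, Complex.normSq_ofReal]
        field_simp [hμ i]
      rw [hns, mul_div_assoc', le_div_iff₀ hμ2]
      nlinarith [Complex.normSq_nonneg (c i), hμε, hμ2]
    · have hci : c i = 0 := dif_neg h
      rw [hci]
      simp


lemma submatrix_mul_left' {l m n o : Type*} [Fintype m] (X : Matrix l m ℂ) (Y : Matrix m n ℂ)
    (f : o → l) : (X * Y).submatrix f id = X.submatrix f id * Y := by
  ext a j'; simp [Matrix.mul_apply]

lemma submatrix_mul_right' {l m n o : Type*} [Fintype m] (X : Matrix l m ℂ) (Y : Matrix m n ℂ)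
    (g : o → n) : (X * Y).submatrix id g = X * Y.submatrix id g := by
  ext a j'; simp [Matrix.mul_apply]

lemma key {N k : ℕ} (M : Matrix (Fin N) (Fin N) ℂ) (ε' : ℝ) (hε' : 0 < ε') (hN : 0 < N)
    (hex : ∀ (w : Fin k → Fin N), ∃ x : Fin N → ℂ, x ≠ 0 ∧ (∀ a, (M *ᵥ x) (w a) = 0) ∧
      Qsum x ≤ ε' ^ 2 * Qsum (M *ᵥ x))
    (f g : Fin k → Fin N) (hf : Function.Injective f) (hg : Function.Injective g)
    (hdet : det (M.submatrix f g) ≠ 0) :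
    ∃ (F G : Fin (k+1) → Fin N), Function.Injective F ∧ Function.Injective G ∧
      ‖(det (M.submatrix f g))‖ / (ε' * N) ≤ ‖(det (M.submatrix F G))‖ := by
  classical
  set B : Matrix (Fin k) (Fin k) ℂ := M.submatrix f g with hBdef
  have hBu : IsUnit B.det := isUnit_iff_ne_zero.mpr hdet
  have hB1 : B * B⁻¹ = 1 := mul_nonsing_inv _ hBu
  have hB2 : B⁻¹ * B = 1 := nonsing_inv_mul _ hBu
  set P : Matrix (Fin N) (Fin N) ℂ := M.submatrix id g * B⁻¹ * M.submatrix f id with hPdef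
  set S : Matrix (Fin N) (Fin N) ℂ := M - P with hSdef
  have hsub1 : (M.submatrix id g).submatrix f id = B := by
    rw [Matrix.submatrix_submatrix, Function.comp_id, Function.id_comp]
  have hsub2 : (M.submatrix f id).submatrix id g = B := by
    rw [Matrix.submatrix_submatrix, Function.comp_id, Function.id_comp]
  have hProw : P.submatrix f id = M.submatrix f id := by
    rw [hPdef, submatrix_mul_left', submatrix_mul_left', hsub1, hB1, Matrix.one_mul]
  have hPcol : P.submatrix id g = M.submatrix id g := by
    rw [hPdef, submatrix_mul_right', hsub2, Matrix.mul_assoc, hB2, Matrix.mul_one]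
  have hSrow : ∀ a j', S (f a) j' = 0 := by
    intro a j'
    have h := congr_fun (congr_fun hProw a) j'
    simp only [Matrix.submatrix_apply, id_eq] at h
    simp [hSdef, Matrix.sub_apply, h]
  have hScol : ∀ i' b, S i' (g b) = 0 := by
    intro i' b
    have h := congr_fun (congr_fun hPcol i') b
    simp only [Matrix.submatrix_apply, id_eq] at h
    simp [hSdef, Matrix.sub_apply, h]
  obtain ⟨x, hx0, hxw, hxq⟩ := hex f
  have hfx : (M.submatrix f id) *ᵥ x = 0 := by
    funext a
    exact hxw a
  have hMS : S *ᵥ x = M *ᵥ x := by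
    rw [hSdef, Matrix.sub_mulVec, hPdef, Matrix.mul_assoc, ← mulVec_mulVec, ← mulVec_mulVec, hfx,
      mulVec_zero, mulVec_zero, sub_zero]
  have hne : (Finset.univ : Finset (Fin N × Fin N)).Nonempty :=
    ⟨(⟨0, hN⟩, ⟨0, hN⟩), Finset.mem_univ _⟩
  set q₀ : ℝ := Finset.univ.sup' hne (fun p : Fin N × Fin N => ‖(S p.1 p.2)‖)
    with hq₀def
  have hq₀all : ∀ i j', ‖(S i j')‖ ≤ q₀ := fun i j' =>
    Finset.le_sup' (f := fun p : Fin N × Fin N => ‖(S p.1 p.2)‖)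
      (Finset.mem_univ (i, j'))
  have hq₀nn : 0 ≤ q₀ := le_trans (norm_nonneg _) (hq₀all ⟨0, hN⟩ ⟨0, hN⟩)
  have hQx : 0 < Qsum x := Qsum_pos hx0
  have hlow : 1 ≤ ε' * N * q₀ := by
    by_contra hcon
    push_neg at hcon
    have h1 : Qsum (S *ᵥ x) ≤ ((N : ℝ) * q₀)^2 * Qsum x := by
      have := Qsum_mulVec_le S q₀ hq₀nn hq₀all x
      rwa [Fintype.card_fin] at this
    rw [hMS] at h1
    have h2 : Qsum x ≤ ε'^2 * (((N:ℝ) * q₀)^2 * Qsum x) :=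
      le_trans hxq (mul_le_mul_of_nonneg_left h1 (by positivity))
    have h3 : (0:ℝ) ≤ ε' * N * q₀ := by positivity
    have h4 : (ε' * N * q₀)^2 < 1 := by nlinarith
    nlinarith [hQx, h2, h4]
  obtain ⟨p, -, hpmax⟩ := Finset.exists_mem_eq_sup' hne
    (fun p : Fin N × Fin N => ‖(S p.1 p.2)‖)
  obtain ⟨i₀, j₀⟩ := p
  have hq₀pos : 0 < q₀ := by nlinarith [hlow, mul_pos hε' ((Nat.cast_pos (α := ℝ)).mpr hN)]
  have hSij : ‖(S i₀ j₀)‖ = q₀ := hpmax.symm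
  have hi₀ : ∀ a, f a ≠ i₀ := by
    intro a h
    have h0 := hSrow a j₀
    rw [h] at h0
    rw [h0] at hSij
    simp at hSij
    exact absurd hSij.symm (ne_of_gt hq₀pos)
  have hj₀ : ∀ b, g b ≠ j₀ := by
    intro b h
    have h0 := hScol i₀ b
    rw [h] at h0
    rw [h0] at hSij
    simp at hSij
    exact absurd hSij.symm (ne_of_gt hq₀pos)
  have hFinj0 : Function.Injective (Sum.elim f (fun _ : Fin 1 => i₀)) := by
    rintro (a|a) (b|b) huv <;> simp only [Sum.elim_inl, Sum.elim_inr] at huv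
    · exact congrArg Sum.inl (hf huv)
    · exact absurd huv (hi₀ a)
    · exact absurd huv.symm (hi₀ b)
    · exact congrArg Sum.inr (Subsingleton.elim a b)
  have hGinj0 : Function.Injective (Sum.elim g (fun _ : Fin 1 => j₀)) := by
    rintro (a|a) (b|b) huv <;> simp only [Sum.elim_inl, Sum.elim_inr] at huv
    · exact congrArg Sum.inl (hg huv)
    · exact absurd huv (hj₀ a)
    · exact absurd huv.symm (hj₀ b)
    · exact congrArg Sum.inr (Subsingleton.elim a b)
  refine ⟨Sum.elim f (fun _ : Fin 1 => i₀) ∘ ⇑finSumFinEquiv.symm,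
    Sum.elim g (fun _ : Fin 1 => j₀) ∘ ⇑finSumFinEquiv.symm,
    hFinj0.comp (Equiv.injective _), hGinj0.comp (Equiv.injective _), ?_⟩
  set E : Matrix (Fin k ⊕ Fin 1) (Fin k ⊕ Fin 1) ℂ :=
    M.submatrix (Sum.elim f (fun _ : Fin 1 => i₀)) (Sum.elim g (fun _ : Fin 1 => j₀)) with hEdef
  have hdetE : det (M.submatrix (Sum.elim f (fun _ : Fin 1 => i₀) ∘ ⇑finSumFinEquiv.symm)
      (Sum.elim g (fun _ : Fin 1 => j₀) ∘ ⇑finSumFinEquiv.symm)) = det E := by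
    rw [show M.submatrix (Sum.elim f (fun _ : Fin 1 => i₀) ∘ ⇑finSumFinEquiv.symm)
      (Sum.elim g (fun _ : Fin 1 => j₀) ∘ ⇑finSumFinEquiv.symm)
      = E.submatrix ⇑finSumFinEquiv.symm ⇑finSumFinEquiv.symm from rfl]
    exact det_submatrix_equiv_self _ _
  have hE : E = fromBlocks B (Matrix.of fun a (_ : Fin 1) => M (f a) j₀)
      (Matrix.of fun (_ : Fin 1) b => M i₀ (g b))
      (Matrix.of fun (_ : Fin 1) (_ : Fin 1) => M i₀ j₀) := by
    ext u v
    rcases u with a|a <;> rcases v with b|b <;> rfl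
  haveI : Invertible B := B.invertibleOfIsUnitDet hBu
  have hdetE2 : det E = det B * S i₀ j₀ := by
    rw [hE, det_fromBlocks₁₁]
    congr 1
    rw [det_fin_one]
    have hPij : (Matrix.of (fun (_ : Fin 1) b => M i₀ (g b)) * ⅟B *
        Matrix.of (fun a (_ : Fin 1) => M (f a) j₀)) 0 0 = P i₀ j₀ := by
      rw [invOf_eq_nonsing_inv]
      simp [hPdef, Matrix.mul_apply]
    simp only [Matrix.sub_apply, hPij, Matrix.of_apply]
    simp [hSdef]
  rw [hdetE, hdetE2, norm_mul, hSij]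
  rw [div_le_iff₀ (by positivity)]
  nlinarith [norm_nonneg (det B), hlow, hq₀pos]

set_option maxHeartbeats 2000000 in
theorem stmt0 {N : ℕ} (A : Matrix (Fin N) (Fin N) ℂ) (hA : A.IsHermitian)
    (hInv : IsUnit A) (m : ℕ) (hm : 1 ≤ m) (ε : ℝ) (hε : 0 < ε)
    (Cm K : ℝ) (hCm : Cm = 1 / (m.factorial * 2 ^ (m - 1))) (hK : K = Cm / N)
    (hcount : m ≤ eigCountIoo A (-ε) ε) :
    ∃ (α β : Finset (Fin N)) (hα : α.card = m) (hβ : β.card = m),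
      ((A⁻¹).submatrix (fun i => ((α.orderIsoOfFin hα) i : Fin N))
            (fun j => ((β.orderIsoOfFin hβ) j : Fin N)) *
          (A⁻¹).submatrix (fun i => ((β.orderIsoOfFin hβ) i : Fin N))
            (fun j => ((α.orderIsoOfFin hα) j : Fin N)) -
        ((K / ε) ^ 2 : ℝ) • (1 : Matrix (Fin m) (Fin m) ℂ)).PosDef := by
  obtain ⟨k, rfl⟩ : ∃ k, m = k + 1 := ⟨m - 1, (Nat.succ_pred_eq_of_pos hm).symm⟩
  have hM : (A⁻¹).IsHermitian := hA.inv
  have hdetA : IsUnit A.det := (Matrix.isUnit_iff_isUnit_det A).mp hInv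
  have hμ0 : ∀ i, hA.eigenvalues i ≠ 0 := by
    intro i hi
    have hd := hA.det_eq_prod_eigenvalues
    rw [Finset.prod_eq_zero (Finset.mem_univ i) (by rw [hi]; exact Complex.ofReal_zero)] at hd
    exact hdetA.ne_zero hd
  set T : Finset (Fin N) :=
    Finset.univ.filter (fun i => hA.eigenvalues i ∈ Set.Ioo (-ε) ε) with hTdef
  have hTcard : k + 1 ≤ T.card := by
    rw [eigCountIoo, dif_pos hA, Nat.card_eq_fintype_card, Fintype.card_subtype] at hcount
    exact hcount
  have hmN : k + 1 ≤ N := le_trans hTcard (le_trans (Finset.card_le_univ T) (by simp))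
  have hN : 0 < N := by omega
  have hTne : T.Nonempty := Finset.card_pos.mp (by omega)
  set ε' : ℝ := T.sup' hTne (fun i => |hA.eigenvalues i|) with hε'def
  have hε'ε : ε' < ε := by
    rw [hε'def, Finset.sup'_lt_iff]
    intro i hi
    have h2 := (Finset.mem_filter.mp hi).2
    rw [Set.mem_Ioo] at h2
    exact abs_lt.mpr h2
  have hε'pos : 0 < ε' := by
    obtain ⟨i₀, hi₀⟩ := hTne
    exact lt_of_lt_of_le (abs_pos.mpr (hμ0 i₀))
      (Finset.le_sup' (fun i => |hA.eigenvalues i|) hi₀)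
  have hTb : ∀ i ∈ T, |hA.eigenvalues i| ≤ ε' := fun i hi =>
    Finset.le_sup' (fun i => |hA.eigenvalues i|) hi
  have hex : ∀ (j : ℕ), j ≤ k → ∀ w : Fin j → Fin N, ∃ x : Fin N → ℂ,
      x ≠ 0 ∧ (∀ a, (A⁻¹ *ᵥ x) (w a) = 0) ∧ Qsum x ≤ ε' ^ 2 * Qsum (A⁻¹ *ᵥ x) :=
    fun j hj w => exvec A hA hμ0 T ε' hTb (by omega) w
  -- inductive existence of nonsingular minors
  have hind : ∀ j, j ≤ k → ∃ f g : Fin j → Fin N, Function.Injective f ∧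
      Function.Injective g ∧ det ((A⁻¹).submatrix f g) ≠ 0 := by
    intro j
    induction j with
    | zero =>
      intro _
      exact ⟨Fin.elim0, Fin.elim0, Function.injective_of_subsingleton _,
        Function.injective_of_subsingleton _, by simp [Matrix.det_isEmpty]⟩
    | succ j ih =>
      intro hj
      obtain ⟨f, g, hf, hg, hd⟩ := ih (by omega)
      obtain ⟨F, G, hF, hG, hle⟩ := key (A⁻¹) ε' hε'pos hN (hex j (by omega)) f g hf hg hd
      refine ⟨F, G, hF, hG, fun h0 => ?_⟩
      rw [h0] at hle
      simp only [norm_zero] at hle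
      have h1 : 0 < ‖(det ((A⁻¹).submatrix f g))‖ / (ε' * ↑N) :=
        div_pos (norm_pos_iff.mpr hd) (by positivity)
      linarith
  -- maximizer at size k
  have hfun_ne : (Finset.univ : Finset ((Fin k → Fin N) × (Fin k → Fin N))).Nonempty :=
    ⟨(fun _ => ⟨0, hN⟩, fun _ => ⟨0, hN⟩), Finset.mem_univ _⟩
  set Dk : ℝ := Finset.univ.sup' hfun_ne
    (fun p : (Fin k → Fin N) × (Fin k → Fin N) =>
      ‖(det ((A⁻¹).submatrix p.1 p.2))‖) with hDkdef
  have hDk_ub : ∀ f g : Fin k → Fin N,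
      ‖(det ((A⁻¹).submatrix f g))‖ ≤ Dk := fun f g =>
    Finset.le_sup' (f := fun p : (Fin k → Fin N) × (Fin k → Fin N) =>
      ‖(det ((A⁻¹).submatrix p.1 p.2))‖) (Finset.mem_univ (f, g))
  have hDkpos : 0 < Dk := by
    obtain ⟨f, g, hf, hg, hd⟩ := hind k le_rfl
    exact lt_of_lt_of_le (norm_pos_iff.mpr hd) (hDk_ub f g)
  obtain ⟨p, -, hpeq⟩ := Finset.exists_mem_eq_sup' hfun_ne
    (fun p : (Fin k → Fin N) × (Fin k → Fin N) =>
      ‖(det ((A⁻¹).submatrix p.1 p.2))‖)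
  obtain ⟨f₀, g₀⟩ := p
  have hmax : ‖(det ((A⁻¹).submatrix f₀ g₀))‖ = Dk := hpeq.symm
  have hd₀ : det ((A⁻¹).submatrix f₀ g₀) ≠ 0 := by
    intro h0
    rw [h0, norm_zero] at hmax
    exact absurd hmax.symm (ne_of_gt hDkpos)
  have hf₀ : Function.Injective f₀ := by
    intro a b hab
    by_contra hne
    exact hd₀ (Matrix.det_zero_of_row_eq hne (funext fun c => by
      simp [Matrix.submatrix_apply, hab]))
  have hg₀ : Function.Injective g₀ := by
    intro a b hab
    by_contra hne
    exact hd₀ (Matrix.det_zero_of_column_eq hne (fun c => by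
      simp [Matrix.submatrix_apply, hab]))
  obtain ⟨F, G, hF, hG, hle⟩ := key (A⁻¹) ε' hε'pos hN (hex k le_rfl) f₀ g₀ hf₀ hg₀ hd₀
  rw [hmax] at hle
  -- the index sets
  set α : Finset (Fin N) := Finset.image F Finset.univ with hαdef
  set β : Finset (Fin N) := Finset.image G Finset.univ with hβdef
  have hα : α.card = k + 1 := by
    rw [hαdef, Finset.card_image_of_injective _ hF, Finset.card_univ, Fintype.card_fin]
  have hβ : β.card = k + 1 := by
    rw [hβdef, Finset.card_image_of_injective _ hG, Finset.card_univ, Fintype.card_fin]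
  refine ⟨α, β, hα, hβ, ?_⟩
  set eα : Fin (k+1) → Fin N := fun i => ((α.orderIsoOfFin hα) i : Fin N) with heαdef
  set eβ : Fin (k+1) → Fin N := fun i => ((β.orderIsoOfFin hβ) i : Fin N) with heβdef
  have heα_inj : Function.Injective eα := fun a b h =>
    (α.orderIsoOfFin hα).injective (Subtype.coe_injective h)
  have heβ_inj : Function.Injective eβ := fun a b h =>
    (β.orderIsoOfFin hβ).injective (Subtype.coe_injective h)
  have hrangeα : Set.range eα = Set.range F := by
    have h1 : Set.range F = (α : Set (Fin N)) := by
      rw [hαdef, Finset.coe_image, Finset.coe_univ, Set.image_univ]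
    have h2 : Set.range eα = (α : Set (Fin N)) := by
      ext y
      constructor
      · rintro ⟨i, rfl⟩; exact (α.orderIsoOfFin hα i).2
      · intro hy
        refine ⟨(α.orderIsoOfFin hα).symm ⟨y, hy⟩, ?_⟩
        show ((α.orderIsoOfFin hα) ((α.orderIsoOfFin hα).symm ⟨y, hy⟩) : Fin N) = y
        rw [OrderIso.apply_symm_apply]
    rw [h1, h2]
  have hrangeβ : Set.range eβ = Set.range G := by
    have h1 : Set.range G = (β : Set (Fin N)) := by
      rw [hβdef, Finset.coe_image, Finset.coe_univ, Set.image_univ]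
    have h2 : Set.range eβ = (β : Set (Fin N)) := by
      ext y
      constructor
      · rintro ⟨i, rfl⟩; exact (β.orderIsoOfFin hβ i).2
      · intro hy
        refine ⟨(β.orderIsoOfFin hβ).symm ⟨y, hy⟩, ?_⟩
        show ((β.orderIsoOfFin hβ) ((β.orderIsoOfFin hβ).symm ⟨y, hy⟩) : Fin N) = y
        rw [OrderIso.apply_symm_apply]
    rw [h1, h2]
  set B₁ : Matrix (Fin (k+1)) (Fin (k+1)) ℂ := (A⁻¹).submatrix eα eβ with hB₁def
  have habsdet : ‖(det B₁)‖ = ‖(det ((A⁻¹).submatrix F G))‖ :=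
    absdet_perm (A⁻¹) eα eβ F G heα_inj hF heβ_inj hG hrangeα hrangeβ
  have hB₁low : Dk / (ε' * N) ≤ ‖(det B₁)‖ := by rw [habsdet]; exact hle
  have hB₁pos : 0 < ‖(det B₁)‖ :=
    lt_of_lt_of_le (div_pos hDkpos (by positivity)) hB₁low
  have hB₁det : det B₁ ≠ 0 := fun h0 => by simp [h0] at hB₁pos
  -- adjugate entries bounded by Dk
  have hadj : ∀ i j : Fin (k+1), ‖(B₁.adjugate i j)‖ ≤ Dk := by
    intro i j
    have h1 := Matrix.adjugate_fin_succ_eq_det_submatrix (n := k) B₁ i j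
    have habs1 : ‖((-1 : ℂ) ^ ((j : ℕ) + (i : ℕ)))‖ = 1 := by simp
    rw [h1, norm_mul, habs1, one_mul, hB₁def, Matrix.submatrix_submatrix]
    exact hDk_ub _ _
  -- inverse entries bounded
  have hent : ∀ i j : Fin (k+1), ‖(B₁⁻¹ i j)‖ ≤ ε' * N := by
    intro i j
    rw [Matrix.inv_def, Matrix.smul_apply, smul_eq_mul, Ring.inverse_eq_inv',
      norm_mul, norm_inv]
    have h5 : Dk ≤ ‖(det B₁)‖ * (ε' * N) := (div_le_iff₀ (by positivity)).mp hB₁low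
    calc (‖(det B₁)‖)⁻¹ * ‖(B₁.adjugate i j)‖
        ≤ (‖(det B₁)‖)⁻¹ * Dk := by
          exact mul_le_mul_of_nonneg_left (hadj i j) (by positivity)
      _ ≤ ε' * N := by
          rw [inv_mul_le_iff₀ hB₁pos]
          linarith [h5]
  -- the conjugate transpose identity
  have hB2 : (A⁻¹).submatrix eβ eα = B₁ᴴ := by
    ext i j
    rw [Matrix.conjTranspose_apply, hB₁def, Matrix.submatrix_apply, Matrix.submatrix_apply]
    exact (hM.apply (eβ i) (eα j)).symm
  rw [hB2]
  refine posDef_iff_dotProduct_mulVec.mpr ⟨?_, ?_⟩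
  · have h1 : (B₁ * B₁ᴴ).IsHermitian := isHermitian_mul_conjTranspose_self B₁
    have h2 : ((((K / ε) ^ 2 : ℝ)) • (1 : Matrix (Fin (k+1)) (Fin (k+1)) ℂ)).IsHermitian := by
      unfold Matrix.IsHermitian
      rw [Matrix.conjTranspose_smul, Matrix.conjTranspose_one, star_trivial]
    exact h1.sub h2
  · intro x hx
    set z : Fin (k+1) → ℂ := B₁ᴴ *ᵥ x with hzdef
    have hdetH : IsUnit (B₁ᴴ.det) := by
      rw [Matrix.det_conjTranspose]
      exact isUnit_iff_ne_zero.mpr (star_ne_zero.mpr hB₁det)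
    have hxz : x = (B₁ᴴ)⁻¹ *ᵥ z := by
      rw [hzdef, mulVec_mulVec, nonsing_inv_mul _ hdetH, one_mulVec]
    have hz0 : z ≠ 0 := by
      intro h0
      rw [h0, mulVec_zero] at hxz
      exact hx hxz
    have hWent : ∀ i j : Fin (k+1), ‖((B₁ᴴ)⁻¹ i j)‖ ≤ ε' * N := by
      intro i j
      rw [← Matrix.conjTranspose_nonsing_inv, Matrix.conjTranspose_apply]
      calc ‖(star (B₁⁻¹ j i))‖ = ‖(B₁⁻¹ j i)‖ := Complex.norm_conj _
        _ ≤ ε' * N := hent j i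
    have hQxz : Qsum x ≤ (((k+1) : ℝ) * (ε' * N)) ^ 2 * Qsum z := by
      rw [hxz]
      have h6 := Qsum_mulVec_le ((B₁ᴴ)⁻¹) (ε' * N) (by positivity) hWent z
      rw [Fintype.card_fin] at h6
      push_cast at h6 ⊢
      exact h6
    have hQz : 0 < Qsum z := Qsum_pos hz0
    have hQxnn : 0 ≤ Qsum x := Finset.sum_nonneg fun i _ => Complex.normSq_nonneg _
    -- dot product computation
    have hdot : star x ⬝ᵥ ((B₁ * B₁ᴴ - ((K / ε) ^ 2 : ℝ) • 1) *ᵥ x) =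
        ((Qsum z - (K / ε) ^ 2 * Qsum x : ℝ) : ℂ) := by
      rw [Matrix.sub_mulVec, dotProduct_sub]
      have hpart1 : star x ⬝ᵥ ((B₁ * B₁ᴴ) *ᵥ x) = (Qsum z : ℂ) := by
        rw [← mulVec_mulVec, dotProduct_mulVec]
        have h7 : star x ᵥ* B₁ = star z := by
          rw [hzdef, star_mulVec, conjTranspose_conjTranspose]
        rw [h7]
        exact star_dot_self z
      have hpart2 : star x ⬝ᵥ ((((K / ε) ^ 2 : ℝ) • (1 : Matrix (Fin (k+1)) (Fin (k+1)) ℂ)) *ᵥ x)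
          = (((K / ε) ^ 2 * Qsum x : ℝ) : ℂ) := by
        rw [Matrix.smul_mulVec, one_mulVec, dotProduct_smul, star_dot_self x]
        push_cast
        rw [Complex.real_smul]
        push_cast
        ring
      rw [hpart1, hpart2]
      push_cast
      ring
    rw [hdot, Complex.zero_lt_real]
    -- the numeric inequality
    have hKeq : K = 1 / (((k+1).factorial : ℝ) * 2 ^ k * N) := by
      rw [hK, hCm, Nat.add_sub_cancel]
      field_simp
    have hKpos : 0 < K := by
      rw [hKeq]
      positivity
    have hkfact : ((k+1).factorial : ℝ) = ((k+1) : ℝ) * (k.factorial : ℝ) := by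
      exact_mod_cast congrArg Nat.cast (Nat.factorial_succ k)
    have hbase_eq : K / ε * (((k+1) : ℝ) * (ε' * N)) = ε' / ((k.factorial : ℝ) * 2 ^ k * ε) := by
      rw [hKeq, hkfact]
      have hNne : (N : ℝ) ≠ 0 := by positivity
      have hfne : (k.factorial : ℝ) ≠ 0 := by positivity
      have h2ne : (2 : ℝ) ^ k ≠ 0 := by positivity
      have hk1ne : ((k+1) : ℝ) ≠ 0 := by positivity
      field_simp
    have hbase_lt : K / ε * (((k+1) : ℝ) * (ε' * N)) < 1 := by
      rw [hbase_eq, div_lt_one (by positivity)]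
      have hf1 : (1 : ℝ) ≤ (k.factorial : ℝ) := by exact_mod_cast Nat.factorial_pos k
      have h2k : (1 : ℝ) ≤ (2:ℝ) ^ k := one_le_pow₀ (by norm_num)
      have h8 : (1 : ℝ) ≤ (k.factorial : ℝ) * 2 ^ k := by nlinarith
      have h9 : ε ≤ (k.factorial : ℝ) * 2 ^ k * ε := by nlinarith
      linarith
    have hbase_nn : 0 ≤ K / ε * (((k+1) : ℝ) * (ε' * N)) := by positivity
    have hc : (K / ε) ^ 2 * ((((k+1) : ℝ) * (ε' * N)) ^ 2) < 1 := by
      rw [← mul_pow]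
      exact pow_lt_one₀ hbase_nn hbase_lt two_ne_zero
    nlinarith [hQz, hQxz, hc, sq_nonneg (K / ε), hQxnn,
      mul_le_mul_of_nonneg_left hQxz (sq_nonneg (K / ε))]
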